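/- Let h : ℝ → ℝ be bounded above by an affine function, ĥ its concave envelope, and x₀ ∈ ℝ. Then ĥ(x₀) = sup { ∫ h dμ : μ a probability measure on ℝ supported on at most two points with barycenter x₀ }, and this supremum equals the supremum over all finitely-supported probability measures with barycenter x₀ of ∫ h dμ. -/

import Mathlib

open MeasureTheory

/-- The concave envelope of `h`: the pointwise infimum of all concave functions dominating `h`. -/
noncomputable def concaveEnvelope (h : ℝ → ℝ) : ℝ → ℝ := fun x =>
  sInf {v : ℝ | ∃ g : ℝ → ℝ, ConcaveOn ℝ Set.univ g ∧ (∀ z, h z ≤ g z) ∧ g x = v}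

def twoPtSet (h : ℝ → ℝ) (x : ℝ) : Set ℝ :=
  {r : ℝ | ∃ μ : Measure ℝ, IsProbabilityMeasure μ ∧
        (∃ s : Finset ℝ, s.card ≤ 2 ∧ μ ((↑s : Set ℝ)ᶜ) = 0) ∧
        (∫ y, y ∂μ) = x ∧ r = ∫ y, h y ∂μ}

def finSet (h : ℝ → ℝ) (x : ℝ) : Set ℝ :=
  {r : ℝ | ∃ μ : Measure ℝ, IsProbabilityMeasure μ ∧
        (∃ s : Finset ℝ, μ ((↑s : Set ℝ)ᶜ) = 0) ∧
        (∫ y, y ∂μ) = x ∧ r = ∫ y, h y ∂μ}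

lemma integrable_dirac'' (f : ℝ → ℝ) (a : ℝ) : Integrable f (Measure.dirac a) := by
  have hae : f =ᵐ[Measure.dirac a] fun _ => f a := by
    rw [MeasureTheory.ae_dirac_eq]
    exact Filter.eventually_pure.2 rfl
  exact (integrable_const (f a)).congr hae.symm

lemma integral_sum_smul_dirac (f : ℝ → ℝ) (s : Finset ℝ) (c : ℝ → ENNReal)
    (hc : ∀ z ∈ s, c z ≠ ⊤) :
    ∫ y, f y ∂(∑ z ∈ s, c z • Measure.dirac z) = ∑ z ∈ s, (c z).toReal * f z := by
  rw [integral_finset_sum_measure (fun z hz => (integrable_dirac'' f z).smul_measure (hc z hz))]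
  refine Finset.sum_congr rfl fun z hz => ?_
  rw [integral_smul_measure, integral_dirac, smul_eq_mul]

lemma measure_eq_sum_smul_dirac (μ : Measure ℝ) (s : Finset ℝ) (hs : μ ((↑s : Set ℝ)ᶜ) = 0) :
    μ = ∑ z ∈ s, μ {z} • Measure.dirac z := by
  classical
  ext t ht
  rw [Measure.finset_sum_apply]
  have h1 : μ t = μ (t ∩ ↑s) := by
    refine le_antisymm ?_ (measure_mono Set.inter_subset_left)
    calc μ t ≤ μ (t ∩ ↑s) + μ (t \ ↑s) := measure_le_inter_add_diff μ t ↑s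
    _ = μ (t ∩ ↑s) := by
        have : μ (t \ ↑s) = 0 := measure_mono_null (Set.diff_subset_compl t ↑s) hs
        rw [this, add_zero]
  have h2 : t ∩ ↑s = ⋃ z ∈ s.filter (· ∈ t), {z} := by
    ext y
    simp only [Set.mem_inter_iff, Set.mem_iUnion, Set.mem_singleton_iff, Finset.mem_filter,
      Finset.mem_coe]
    constructor
    · rintro ⟨hyt, hys⟩; exact ⟨y, ⟨hys, hyt⟩, rfl⟩
    · rintro ⟨z, ⟨hzs, hzt⟩, rfl⟩; exact ⟨hzt, hzs⟩
  have h3 : μ (t ∩ ↑s) = ∑ z ∈ s.filter (· ∈ t), μ {z} := by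
    rw [h2]
    exact measure_biUnion_finset
      (fun a _ b _ hab => by simp [Set.disjoint_singleton, hab])
      (fun b _ => measurableSet_singleton b)
  rw [h1, h3]
  rw [Finset.sum_filter]
  refine Finset.sum_congr rfl fun z hz => ?_
  rw [Measure.smul_apply, Measure.dirac_apply, smul_eq_mul]
  by_cases hzt : z ∈ t
  · simp [hzt]
  · simp [hzt]

lemma integral_of_support (μ : Measure ℝ) [IsProbabilityMeasure μ] (s : Finset ℝ)
    (hs : μ ((↑s : Set ℝ)ᶜ) = 0) (f : ℝ → ℝ) :
    ∫ y, f y ∂μ = ∑ z ∈ s, (μ {z}).toReal * f z := by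
  conv_lhs => rw [measure_eq_sum_smul_dirac μ s hs]
  exact integral_sum_smul_dirac f s _ (fun z _ => measure_ne_top μ _)

lemma integrable_of_support (μ : Measure ℝ) [IsProbabilityMeasure μ] (s : Finset ℝ)
    (hs : μ ((↑s : Set ℝ)ᶜ) = 0) (f : ℝ → ℝ) : Integrable f μ := by
  rw [measure_eq_sum_smul_dirac μ s hs]
  exact integrable_finset_sum_measure.mpr
    (fun z _ => (integrable_dirac'' f z).smul_measure (measure_ne_top μ _))

lemma exists_measure_of_weights (s : Finset ℝ) (p : ℝ → ℝ) (hp : ∀ z ∈ s, 0 ≤ p z)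
    (h1 : ∑ z ∈ s, p z = 1) :
    ∃ μ : Measure ℝ, IsProbabilityMeasure μ ∧ μ ((↑s : Set ℝ)ᶜ) = 0 ∧
      ∀ f : ℝ → ℝ, ∫ y, f y ∂μ = ∑ z ∈ s, p z * f z := by
  refine ⟨∑ z ∈ s, ENNReal.ofReal (p z) • Measure.dirac z, ⟨?_⟩, ?_, ?_⟩
  · rw [Measure.finset_sum_apply]
    simp only [Measure.smul_apply, measure_univ, smul_eq_mul, mul_one]
    rw [← ENNReal.ofReal_sum_of_nonneg hp, h1, ENNReal.ofReal_one]
  · rw [Measure.finset_sum_apply]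
    refine Finset.sum_eq_zero fun z hz => ?_
    rw [Measure.smul_apply, Measure.dirac_apply, smul_eq_mul]
    simp [Set.indicator_of_notMem, hz]
  · intro f
    rw [integral_sum_smul_dirac f s _ (fun z _ => ENNReal.ofReal_ne_top)]
    exact Finset.sum_congr rfl fun z hz => by rw [ENNReal.toReal_ofReal (hp z hz)]


lemma twoPt_subset_finSet (h : ℝ → ℝ) (x : ℝ) : twoPtSet h x ⊆ finSet h x := by
  rintro r ⟨μ, h1, ⟨s, _, h2⟩, h3, h4⟩
  exact ⟨μ, h1, ⟨s, h2⟩, h3, h4⟩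

lemma mem_finSet_le {h : ℝ → ℝ} {α β : ℝ} (hb : ∀ x, h x ≤ α + β * x) {x r : ℝ}
    (hr : r ∈ finSet h x) : r ≤ α + β * x := by
  obtain ⟨μ, hprob, ⟨s, hs⟩, hbar, rfl⟩ := hr
  rw [integral_of_support μ s hs h]
  have hbar' : ∑ z ∈ s, (μ {z}).toReal * z = x := by
    rw [← hbar, integral_of_support μ s hs (fun y => y)]
  have hone : ∑ z ∈ s, (μ {z}).toReal * 1 = 1 := by
    have := integral_of_support μ s hs (fun _ => (1 : ℝ))
    simp only [integral_const, measure_univ, probReal_univ, ENNReal.toReal_one, smul_eq_mul, one_mul] at this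
    linarith [this]
  calc ∑ z ∈ s, (μ {z}).toReal * h z
      ≤ ∑ z ∈ s, (μ {z}).toReal * (α + β * z) := by
        refine Finset.sum_le_sum fun z _ => ?_
        exact mul_le_mul_of_nonneg_left (hb z) ENNReal.toReal_nonneg
    _ = α * (∑ z ∈ s, (μ {z}).toReal * 1) + β * (∑ z ∈ s, (μ {z}).toReal * z) := by
        rw [Finset.mul_sum, Finset.mul_sum, ← Finset.sum_add_distrib]
        exact Finset.sum_congr rfl fun z _ => by ring
    _ = α + β * x := by rw [hone, hbar', mul_one]

lemma bddAbove_finSet (h : ℝ → ℝ) (α β : ℝ) (hb : ∀ x, h x ≤ α + β * x) (x : ℝ) :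
    BddAbove (finSet h x) := ⟨α + β * x, fun _ hr => mem_finSet_le hb hr⟩

lemma bddAbove_twoPtSet (h : ℝ → ℝ) (α β : ℝ) (hb : ∀ x, h x ≤ α + β * x) (x : ℝ) :
    BddAbove (twoPtSet h x) :=
  (bddAbove_finSet h α β hb x).mono (twoPt_subset_finSet h x)

lemma mem_twoPtSet_self (h : ℝ → ℝ) (x : ℝ) : h x ∈ twoPtSet h x := by
  refine ⟨Measure.dirac x, inferInstance, ⟨{x}, by simp, ?_⟩, ?_, ?_⟩
  · rw [Measure.dirac_apply]
    simp
  · exact integral_dirac (fun y => y) x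
  · exact (integral_dirac h x).symm

lemma affine_concave (α β : ℝ) : ConcaveOn ℝ Set.univ (fun z => α + β * z) := by
  refine ⟨convex_univ, fun x _ y _ a b ha hb hab => le_of_eq ?_⟩
  simp only [smul_eq_mul]
  ring_nf
  linear_combination α * hab

lemma le_concaveEnvelope (h : ℝ → ℝ) (α β : ℝ) (hb : ∀ x, h x ≤ α + β * x) (x : ℝ) :
    h x ≤ concaveEnvelope h x := by
  refine le_csInf ⟨α + β * x, fun z => α + β * z, affine_concave α β, hb, rfl⟩ ?_
  rintro v ⟨g, _, hdom, rfl⟩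
  exact hdom x

lemma concaveEnvelope_le (h : ℝ → ℝ) {g : ℝ → ℝ} (hg : ConcaveOn ℝ Set.univ g)
    (hdom : ∀ z, h z ≤ g z) (x : ℝ) : concaveEnvelope h x ≤ g x :=
  csInf_le ⟨h x, by rintro v ⟨g', _, hd, rfl⟩; exact hd x⟩ ⟨g, hg, hdom, rfl⟩

lemma concaveEnvelope_concave (h : ℝ → ℝ) (α β : ℝ) (hb : ∀ x, h x ≤ α + β * x) :
    ConcaveOn ℝ Set.univ (concaveEnvelope h) := by
  refine ⟨convex_univ, fun x _ y _ a b ha hb' hab => ?_⟩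
  refine le_csInf ⟨α + β * (a • x + b • y), fun z => α + β * z, affine_concave α β, hb, rfl⟩ ?_
  rintro v ⟨g, hg, hdom, rfl⟩
  have h₁ : concaveEnvelope h x ≤ g x := concaveEnvelope_le h hg hdom x
  have h₂ : concaveEnvelope h y ≤ g y := concaveEnvelope_le h hg hdom y
  have h₃ := hg.2 (Set.mem_univ x) (Set.mem_univ y) ha hb' hab
  simp only [smul_eq_mul] at *
  nlinarith [mul_le_mul_of_nonneg_left h₁ ha, mul_le_mul_of_nonneg_left h₂ hb']

lemma mul_csSup_le {S : Set ℝ} (hS : S.Nonempty) {a c : ℝ} (ha : 0 ≤ a)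
    (H : ∀ s ∈ S, a * s ≤ c) : a * sSup S ≤ c := by
  rcases ha.eq_or_lt' with rfl | ha'
  · obtain ⟨s₀, hs₀⟩ := hS
    have : (0:ℝ) ≤ c := by simpa using H s₀ hs₀
    simpa using this
  · have hle : sSup S ≤ c / a := csSup_le hS fun s hs => (le_div_iff₀ ha').mpr
      (by linarith [H s hs])
    calc a * sSup S ≤ a * (c / a) := mul_le_mul_of_nonneg_left hle ha
      _ = c := by field_simp

lemma add_mul_csSup_le {S T : Set ℝ} (hS : S.Nonempty) (hT : T.Nonempty) {a b c : ℝ}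
    (ha : 0 ≤ a) (hb : 0 ≤ b) (H : ∀ s ∈ S, ∀ t ∈ T, a * s + b * t ≤ c) :
    a * sSup S + b * sSup T ≤ c := by
  have h1 : ∀ s ∈ S, a * s ≤ c - b * sSup T := by
    intro s hs
    have := mul_csSup_le hT hb (c := c - a * s) (fun t ht => by linarith [H s hs t ht])
    linarith
  have := mul_csSup_le hS ha (c := c - b * sSup T) h1
  linarith

lemma sum_shift (s : Finset ℝ) (p g : ℝ → ℝ) {a b c : ℝ} (ha : a ∈ s) (hb : b ∈ s)
    (hc : c ∈ s) (ta tb tc : ℝ) :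
    ∑ z ∈ s, (p z + ((if z = a then ta else 0) + (if z = b then tb else 0) +
        (if z = c then tc else 0))) * g z
      = (∑ z ∈ s, p z * g z) + (ta * g a + tb * g b + tc * g c) := by
  simp only [add_mul, Finset.sum_add_distrib, ite_mul, zero_mul]
  rw [Finset.sum_ite_eq' s a (fun z => ta * g z), Finset.sum_ite_eq' s b (fun z => tb * g z),
    Finset.sum_ite_eq' s c (fun z => tc * g z)]
  simp [ha, hb, hc]

lemma sum_mem_twoPtSet (h : ℝ → ℝ) (s : Finset ℝ) (hcard : s.card ≤ 2) (p : ℝ → ℝ)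
    (hp : ∀ z ∈ s, 0 ≤ p z) (h1 : ∑ z ∈ s, p z = 1) :
    (∑ z ∈ s, p z * h z) ∈ twoPtSet h (∑ z ∈ s, p z * z) := by
  obtain ⟨μ, hprob, hsupp, hint⟩ := exists_measure_of_weights s p hp h1
  exact ⟨μ, hprob, ⟨s, hcard, hsupp⟩, hint (fun y => y), (hint h).symm⟩

lemma reduce (h : ℝ → ℝ) (α β : ℝ) (hβ : ∀ x, h x ≤ α + β * x) :
    ∀ (n : ℕ) (s : Finset ℝ) (p : ℝ → ℝ) (x : ℝ), s.card ≤ n → (∀ z ∈ s, 0 ≤ p z) →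
      (∑ z ∈ s, p z) = 1 → (∑ z ∈ s, p z * z) = x →
      (∑ z ∈ s, p z * h z) ≤ sSup (twoPtSet h x) := by
  intro n
  induction n with
  | zero =>
    intro s p x hcard _ h1 _
    rw [Nat.le_zero, Finset.card_eq_zero] at hcard
    subst hcard
    simp at h1
  | succ n ih =>
    intro s p x hcard hpos h1 hbar
    by_cases hle : s.card ≤ 2
    · have hmem := sum_mem_twoPtSet h s hle p hpos h1
      rw [hbar] at hmem
      exact le_csSup (bddAbove_twoPtSet h α β hβ x) hmem
    · push_neg at hle
      have h3 : 3 ≤ s.card := hle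
      have hne : s.Nonempty := Finset.card_pos.mp (by omega)
      set u := s.min' hne with hu_def
      set w := s.max' hne with hw_def
      have hu : u ∈ s := s.min'_mem hne
      have hw : w ∈ s := s.max'_mem hne
      have huw : u < w := s.min'_lt_max'_of_card (by omega)
      have hvex : ((s.erase u).erase w).Nonempty := by
        refine Finset.card_pos.mp ?_
        have hw' : w ∈ s.erase u := Finset.mem_erase.mpr ⟨ne_of_gt huw, hw⟩
        rw [Finset.card_erase_of_mem hw', Finset.card_erase_of_mem hu]
        omega
      obtain ⟨v, hv'⟩ := hvex
      have hvw : v ≠ w := (Finset.mem_erase.mp hv').1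
      have hv'' : v ∈ s.erase u := (Finset.mem_erase.mp hv').2
      have hvu : v ≠ u := (Finset.mem_erase.mp hv'').1
      have hv : v ∈ s := (Finset.mem_erase.mp hv'').2
      have huv : u < v := lt_of_le_of_ne (s.min'_le v hv) (Ne.symm hvu)
      have hvw' : v < w := lt_of_le_of_ne (s.le_max' v hv) hvw
      set lam := (w - v) / (w - u) with hlam_def
      have hwu : (0:ℝ) < w - u := by linarith
      have hlam0 : 0 < lam := div_pos (by linarith) hwu
      have hlam1 : lam < 1 := (div_lt_one hwu).mpr (by linarith)
      have hkey : lam * u + (1 - lam) * w = v := by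
        rw [hlam_def]
        field_simp
        ring
      -- helper to finish: given new weights vanishing at a point
      have key : ∀ (q : ℝ → ℝ) (z₀ : ℝ), z₀ ∈ s → q z₀ = 0 → (∀ z ∈ s, 0 ≤ q z) →
          (∑ z ∈ s, q z) = 1 → (∑ z ∈ s, q z * z) = x →
          (∑ z ∈ s, q z * h z) ≤ sSup (twoPtSet h x) := by
        intro q z₀ hz₀ hq0 hqpos hq1 hqbar
        have hcarde : (s.erase z₀).card ≤ n := by
          rw [Finset.card_erase_of_mem hz₀]; omega
        have e1 : (∑ z ∈ s.erase z₀, q z) = 1 := by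
          rwa [Finset.sum_erase (f := fun z => q z) s hq0]
        have e2 : (∑ z ∈ s.erase z₀, q z * z) = x := by
          rwa [Finset.sum_erase (f := fun z => q z * z) s (by simp [hq0])]
        have e3 := ih (s.erase z₀) q x hcarde
          (fun z hz => hqpos z (Finset.mem_of_mem_erase hz)) e1 e2
        rwa [Finset.sum_erase (f := fun z => q z * h z) s (by simp [hq0])] at e3
      by_cases hcase : h v ≤ lam * h u + (1 - lam) * h w
      · -- move mass from v onto u and w
        set q : ℝ → ℝ := fun z => p z + ((if z = u then lam * p v else 0) +
          (if z = v then -(p v) else 0) + (if z = w then (1 - lam) * p v else 0)) with hq_def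
        have hsum : ∀ g : ℝ → ℝ, ∑ z ∈ s, q z * g z
            = (∑ z ∈ s, p z * g z) + (lam * p v * g u + (-(p v)) * g v +
              ((1 - lam) * p v) * g w) :=
          fun g => sum_shift s p g hu hv hw _ _ _
        have hqu : q u = p u + lam * p v := by
          simp only [hq_def, if_pos rfl, if_true, if_neg (Ne.symm hvu), if_neg (ne_of_lt (huv.trans hvw'))]
          ring
        have hqv : q v = 0 := by
          simp only [hq_def, if_neg hvu, if_pos rfl, if_true, if_neg hvw]
          ring
        have hqw : q w = p w + (1 - lam) * p v := by
          simp only [hq_def, if_neg (ne_of_gt (huv.trans hvw')), if_neg (ne_of_gt hvw'),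
            if_pos rfl, if_true]
          ring
        have hpv : 0 ≤ p v := hpos v hv
        have hqpos : ∀ z ∈ s, 0 ≤ q z := by
          intro z hz
          by_cases h1z : z = u
          · subst h1z; rw [hqu]; have := hpos u hu; nlinarith
          by_cases h2z : z = v
          · subst h2z; rw [hqv]
          by_cases h3z : z = w
          · subst h3z; rw [hqw]; have := hpos w hw; nlinarith
          · have : q z = p z := by simp only [hq_def, if_neg h1z, if_neg h2z, if_neg h3z]; ring
            rw [this]; exact hpos z hz
        have hq1 : ∑ z ∈ s, q z = 1 := by
          have := hsum (fun _ => (1:ℝ))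
          simp only [mul_one] at this
          rw [this, h1]; ring
        have hqbar : ∑ z ∈ s, q z * z = x := by
          rw [hsum (fun z => z), hbar]
          linear_combination p v * hkey
        have hqval : ∑ z ∈ s, p z * h z ≤ ∑ z ∈ s, q z * h z := by
          rw [hsum h]
          nlinarith
        exact hqval.trans (key q v hv hqv hqpos hq1 hqbar)
      · -- move mass from u and w onto v
        push_neg at hcase
        set ε := min (p u / lam) (p w / (1 - lam)) with hε_def
        have hpu : 0 ≤ p u := hpos u hu
        have hpw : 0 ≤ p w := hpos w hw
        have hε0 : 0 ≤ ε := le_min (div_nonneg hpu hlam0.le) (div_nonneg hpw (by linarith))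
        have hεu : ε * lam ≤ p u := by
          have := min_le_left (p u / lam) (p w / (1 - lam))
          calc ε * lam ≤ (p u / lam) * lam := by nlinarith
            _ = p u := div_mul_cancel₀ _ (ne_of_gt hlam0)
        have hεw : ε * (1 - lam) ≤ p w := by
          have := min_le_right (p u / lam) (p w / (1 - lam))
          calc ε * (1 - lam) ≤ (p w / (1 - lam)) * (1 - lam) := by nlinarith
            _ = p w := div_mul_cancel₀ _ (by linarith)
        set q : ℝ → ℝ := fun z => p z + ((if z = u then -(ε * lam) else 0) +
          (if z = v then ε else 0) + (if z = w then -(ε * (1 - lam)) else 0)) with hq_def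
        have hsum : ∀ g : ℝ → ℝ, ∑ z ∈ s, q z * g z
            = (∑ z ∈ s, p z * g z) + ((-(ε * lam)) * g u + ε * g v +
              (-(ε * (1 - lam))) * g w) :=
          fun g => sum_shift s p g hu hv hw _ _ _
        have hqu : q u = p u - ε * lam := by
          simp only [hq_def, if_pos rfl, if_true, if_neg (Ne.symm hvu), if_neg (ne_of_lt (huv.trans hvw'))]
          ring
        have hqv : q v = p v + ε := by
          simp only [hq_def, if_neg hvu, if_pos rfl, if_true, if_neg hvw]
          ring
        have hqw : q w = p w - ε * (1 - lam) := by
          simp only [hq_def, if_neg (ne_of_gt (huv.trans hvw')), if_neg (ne_of_gt hvw'),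
            if_pos rfl, if_true]
          ring
        have hqpos : ∀ z ∈ s, 0 ≤ q z := by
          intro z hz
          by_cases h1z : z = u
          · subst h1z; rw [hqu]; linarith
          by_cases h2z : z = v
          · subst h2z; rw [hqv]; have := hpos z hz; linarith
          by_cases h3z : z = w
          · subst h3z; rw [hqw]; linarith
          · have : q z = p z := by simp only [hq_def, if_neg h1z, if_neg h2z, if_neg h3z]; ring
            rw [this]; exact hpos z hz
        have hq1 : ∑ z ∈ s, q z = 1 := by
          have := hsum (fun _ => (1:ℝ))
          simp only [mul_one] at this
          rw [this, h1]; ring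
        have hqbar : ∑ z ∈ s, q z * z = x := by
          rw [hsum (fun z => z), hbar]
          linear_combination (-ε) * hkey
        have hqval : ∑ z ∈ s, p z * h z ≤ ∑ z ∈ s, q z * h z := by
          rw [hsum h]
          nlinarith
        rcases le_total (p u / lam) (p w / (1 - lam)) with hm | hm
        · have hεeq : ε = p u / lam := min_eq_left hm
          have hqu0 : q u = 0 := by
            rw [hqu, hεeq, div_mul_cancel₀ _ (ne_of_gt hlam0)]; ring
          exact hqval.trans (key q u hu hqu0 hqpos hq1 hqbar)
        · have hεeq : ε = p w / (1 - lam) := min_eq_right hm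
          have hqw0 : q w = 0 := by
            rw [hqw, hεeq, div_mul_cancel₀ _ (by linarith : (1:ℝ) - lam ≠ 0)]; ring
          exact hqval.trans (key q w hw hqw0 hqpos hq1 hqbar)

lemma main_le (h : ℝ → ℝ) (α β : ℝ) (hβ : ∀ x, h x ≤ α + β * x) (x : ℝ)
    (μ : Measure ℝ) [IsProbabilityMeasure μ] (s : Finset ℝ) (hs : μ ((↑s : Set ℝ)ᶜ) = 0)
    (hbar : ∫ y, y ∂μ = x) : ∫ y, h y ∂μ ≤ sSup (twoPtSet h x) := by
  rw [integral_of_support μ s hs h]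
  refine reduce h α β hβ s.card s (fun z => (μ {z}).toReal) x le_rfl
    (fun z _ => ENNReal.toReal_nonneg) ?_ ?_
  · have := integral_of_support μ s hs (fun _ => (1 : ℝ))
    simp only [integral_const, measure_univ, probReal_univ, ENNReal.toReal_one, smul_eq_mul, one_mul,
      mul_one] at this
    linarith [this]
  · rw [← hbar, integral_of_support μ s hs (fun y => y)]

lemma twoPtSup_concave (h : ℝ → ℝ) (α β : ℝ) (hβ : ∀ x, h x ≤ α + β * x) :
    ConcaveOn ℝ Set.univ (fun x => sSup (twoPtSet h x)) := by
  refine ⟨convex_univ, fun x _ y _ a b ha hb hab => ?_⟩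
  simp only [smul_eq_mul]
  refine add_mul_csSup_le ⟨h x, mem_twoPtSet_self h x⟩ ⟨h y, mem_twoPtSet_self h y⟩ ha hb ?_
  rintro r₁ ⟨μ₁, hp₁, ⟨s₁, _, hs₁⟩, hbar₁, rfl⟩ r₂ ⟨μ₂, hp₂, ⟨s₂, _, hs₂⟩, hbar₂, rfl⟩
  set μ : Measure ℝ := ENNReal.ofReal a • μ₁ + ENNReal.ofReal b • μ₂ with hμ_def
  have hint : ∀ f : ℝ → ℝ, ∫ z, f z ∂μ = a * ∫ z, f z ∂μ₁ + b * ∫ z, f z ∂μ₂ := by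
    intro f
    rw [hμ_def, integral_add_measure
        ((integrable_of_support μ₁ s₁ hs₁ f).smul_measure ENNReal.ofReal_ne_top)
        ((integrable_of_support μ₂ s₂ hs₂ f).smul_measure ENNReal.ofReal_ne_top),
      integral_smul_measure, integral_smul_measure, ENNReal.toReal_ofReal ha,
      ENNReal.toReal_ofReal hb, smul_eq_mul, smul_eq_mul]
  have hprob : IsProbabilityMeasure μ := by
    constructor
    rw [hμ_def]
    simp only [Measure.add_apply, Measure.smul_apply, measure_univ, smul_eq_mul, mul_one]
    rw [← ENNReal.ofReal_add ha hb, hab, ENNReal.ofReal_one]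
  have hsupp : μ ((↑(s₁ ∪ s₂) : Set ℝ)ᶜ) = 0 := by
    rw [hμ_def]
    simp only [Measure.add_apply, Measure.smul_apply, smul_eq_mul]
    have e1 : μ₁ ((↑(s₁ ∪ s₂) : Set ℝ)ᶜ) = 0 := by
      refine measure_mono_null ?_ hs₁
      rw [Finset.coe_union]
      exact Set.compl_subset_compl.mpr Set.subset_union_left
    have e2 : μ₂ ((↑(s₁ ∪ s₂) : Set ℝ)ᶜ) = 0 := by
      refine measure_mono_null ?_ hs₂
      rw [Finset.coe_union]
      exact Set.compl_subset_compl.mpr Set.subset_union_right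
    rw [e1, e2, mul_zero, mul_zero, add_zero]
  have hbar : ∫ z, (fun y => y) z ∂μ = a * x + b * y := by
    rw [hint (fun y => y), hbar₁, hbar₂]
  have := main_le h α β hβ (a * x + b * y) μ (s₁ ∪ s₂) hsupp hbar
  rw [hint h] at this
  exact this

/-- For `h` bounded above by an affine function, `ĥ(x₀)` equals the supremum of `∫ h dμ` over
probability measures `μ` supported on at most two points with barycenter `x₀`, and this in turn
equals the supremum over all finitely-supported probability measures with barycenter `x₀`. -/
theorem concaveEnvelope_eq_sup_two_point (h : ℝ → ℝ) (α β : ℝ)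
    (hb : ∀ x, h x ≤ α + β * x) (x₀ : ℝ) :
    concaveEnvelope h x₀ =
      sSup {r : ℝ | ∃ μ : Measure ℝ, IsProbabilityMeasure μ ∧
        (∃ s : Finset ℝ, s.card ≤ 2 ∧ μ ((↑s : Set ℝ)ᶜ) = 0) ∧
        (∫ y, y ∂μ) = x₀ ∧ r = ∫ y, h y ∂μ} ∧
    sSup {r : ℝ | ∃ μ : Measure ℝ, IsProbabilityMeasure μ ∧
        (∃ s : Finset ℝ, s.card ≤ 2 ∧ μ ((↑s : Set ℝ)ᶜ) = 0) ∧
        (∫ y, y ∂μ) = x₀ ∧ r = ∫ y, h y ∂μ} =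
      sSup {r : ℝ | ∃ μ : Measure ℝ, IsProbabilityMeasure μ ∧
        (∃ s : Finset ℝ, μ ((↑s : Set ℝ)ᶜ) = 0) ∧
        (∫ y, y ∂μ) = x₀ ∧ r = ∫ y, h y ∂μ} := by
  show concaveEnvelope h x₀ = sSup (twoPtSet h x₀) ∧
    sSup (twoPtSet h x₀) = sSup (finSet h x₀)
  have hA_ne : (twoPtSet h x₀).Nonempty := ⟨h x₀, mem_twoPtSet_self h x₀⟩
  have hB_ne : (finSet h x₀).Nonempty := ⟨h x₀, twoPt_subset_finSet h x₀ (mem_twoPtSet_self h x₀)⟩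
  have hAB : sSup (twoPtSet h x₀) ≤ sSup (finSet h x₀) :=
    csSup_le_csSup (bddAbove_finSet h α β hb x₀) hA_ne (twoPt_subset_finSet h x₀)
  -- B ≤ E : Jensen
  have hBE : sSup (finSet h x₀) ≤ concaveEnvelope h x₀ := by
    refine csSup_le hB_ne ?_
    rintro r ⟨μ, hprob, ⟨s, hs⟩, hbar, rfl⟩
    rw [integral_of_support μ s hs h]
    have hone : ∑ z ∈ s, (μ {z}).toReal = 1 := by
      have := integral_of_support μ s hs (fun _ => (1 : ℝ))
      simp only [integral_const, measure_univ, probReal_univ, ENNReal.toReal_one, smul_eq_mul, one_mul,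
        mul_one] at this
      linarith [this]
    have hbar' : ∑ z ∈ s, (μ {z}).toReal * z = x₀ := by
      rw [← hbar, integral_of_support μ s hs (fun y => y)]
    calc ∑ z ∈ s, (μ {z}).toReal * h z
        ≤ ∑ z ∈ s, (μ {z}).toReal * concaveEnvelope h z :=
          Finset.sum_le_sum fun z _ => mul_le_mul_of_nonneg_left
            (le_concaveEnvelope h α β hb z) ENNReal.toReal_nonneg
      _ = ∑ z ∈ s, (μ {z}).toReal • concaveEnvelope h z := by
          simp only [smul_eq_mul]
      _ ≤ concaveEnvelope h (∑ z ∈ s, (μ {z}).toReal • z) :=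
          (concaveEnvelope_concave h α β hb).le_map_sum
            (fun z _ => ENNReal.toReal_nonneg) hone (fun z _ => Set.mem_univ z)
      _ = concaveEnvelope h x₀ := by
          rw [show ∑ z ∈ s, (μ {z}).toReal • z = x₀ by
            simp only [smul_eq_mul]; exact hbar']
  -- E ≤ A : two-point sup is a concave majorant
  have hEA : concaveEnvelope h x₀ ≤ sSup (twoPtSet h x₀) :=
    concaveEnvelope_le h (twoPtSup_concave h α β hb)
      (fun z => le_csSup (bddAbove_twoPtSet h α β hb z) (mem_twoPtSet_self h z)) x₀
  -- B ≤ A : Carathéodory reduction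
  have hBA : sSup (finSet h x₀) ≤ sSup (twoPtSet h x₀) := by
    refine csSup_le hB_ne ?_
    rintro r ⟨μ, hprob, ⟨s, hs⟩, hbar, rfl⟩
    exact main_le h α β hb x₀ μ s hs hbar
  exact ⟨le_antisymm hEA (hAB.trans hBE), le_antisymm hAB hBA⟩
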